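/- Let m be a positive integer and let x be a real number with 0 < x < π. Then lim_{α→2m−1} [ π x^{α−1} / (4 Γ(α) cos(πα/2)) + (−1)^{m−1} λ(α−2m+2) x^{2m−2}/(2m−2)! ] = (−1)^m x^{2m−2} ( log(x/2) − H_{2m−2} ) / (2·(2m−2)!). -/

import Mathlib

open Filter Topology Real

/-- The Dirichlet lambda function `λ(s) = (1 - 2^(-s)) ζ(s)`, equal to
`∑_{n=1}^∞ (2n-1)^(-s)` for `Re s > 1`. -/
noncomputable def dirichletLambda (s : ℂ) : ℂ := (1 - (2 : ℂ) ^ (-s)) * riemannZeta s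

namespace LambdaAux

lemma sin_ne {t : ℂ} (ht : t ≠ 0) (h2 : ‖t‖ < 2) : Complex.sin ((π : ℂ) * t / 2) ≠ 0 := by
  intro h
  rw [Complex.sin_eq_zero_iff] at h
  obtain ⟨k, hk⟩ := h
  have hπ : (π : ℂ) ≠ 0 := Complex.ofReal_ne_zero.mpr Real.pi_ne_zero
  have ht2 : t = 2 * k := by
    have h2' : (π:ℂ) * t = (π:ℂ) * (2 * k) := by linear_combination 2 * hk
    exact mul_left_cancel₀ hπ h2'
  have hk0 : k ≠ 0 := by rintro rfl; simp at ht2; exact ht ht2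
  have : (2:ℝ) ≤ ‖t‖ := by
    rw [ht2]
    have : ‖(k:ℂ)‖ = |(k:ℝ)| := by
      rw [show ((k:ℂ)) = (((k:ℝ)):ℂ) by push_cast; ring, Complex.norm_real, Real.norm_eq_abs]
    rw [norm_mul, this]
    have h1 : (1:ℝ) ≤ |(k:ℝ)| := by
      rw [show |(k:ℝ)| = ((|k| : ℤ) : ℝ) by push_cast; ring]
      exact_mod_cast Int.one_le_abs hk0
    simp only [Complex.norm_ofNat]
    nlinarith
  linarith

lemma hderiv_sin0 : HasDerivAt (fun t : ℂ => Complex.sin ((π:ℂ) * t / 2)) ((π:ℂ)/2) 0 := by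
  have h : HasDerivAt (fun t : ℂ => (π:ℂ) * t / 2) ((π:ℂ)/2) 0 := by
    simpa using ((hasDerivAt_id (0:ℂ)).const_mul (π:ℂ)).div_const 2
  have := (Complex.hasDerivAt_sin ((π:ℂ) * 0 / 2)).comp 0 h
  simpa [Function.comp_def] using this

lemma tendsto_sin_div :
    Tendsto (fun t : ℂ => Complex.sin ((π:ℂ) * t / 2) / t) (𝓝[≠] 0) (𝓝 ((π:ℂ)/2)) := by
  have h := hasDerivAt_iff_tendsto_slope.mp hderiv_sin0
  refine h.congr fun t => ?_
  simp [slope_def_field]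

lemma tendsto_w :
    Tendsto (fun t : ℂ => t / Complex.sin ((π:ℂ) * t / 2)) (𝓝[≠] 0) (𝓝 (2/(π:ℂ))) := by
  have hπ : ((π:ℂ)/2) ≠ 0 := by
    simp [Complex.ofReal_ne_zero, Real.pi_ne_zero]
  have h := tendsto_sin_div.inv₀ hπ
  rw [inv_div] at h
  refine h.congr fun t => ?_
  rw [inv_div]


lemma tendsto_neg_punctured : Tendsto (fun t : ℂ => -t) (𝓝[≠] 0) (𝓝[≠] 0) := by
  rw [tendsto_nhdsWithin_iff]
  constructor
  · simpa using (continuous_neg.tendsto (0:ℂ)).mono_left nhdsWithin_le_nhds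
  · exact eventually_mem_nhdsWithin.mono fun t ht => by simpa using ht

lemma w_even (t : ℂ) :
    (-t) / Complex.sin ((π:ℂ) * (-t) / 2) = t / Complex.sin ((π:ℂ) * t / 2) := by
  rw [show (π:ℂ) * (-t) / 2 = -((π:ℂ) * t / 2) by ring, Complex.sin_neg, neg_div_neg_eq]


lemma tendsto_q :
    Tendsto (fun t : ℂ => (t / Complex.sin ((π:ℂ) * t / 2) - 2/(π:ℂ)) / t)
      (𝓝[≠] 0) (𝓝 0) := by
  set w : ℂ → ℂ := fun t => t / Complex.sin ((π:ℂ) * t / 2) with hw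
  -- bound
  obtain ⟨ε, hε, hball⟩ := Metric.mem_nhdsWithin_iff.mp
    (tendsto_w.norm.eventually_lt_const (lt_add_one ‖(2:ℂ)/(π:ℂ)‖))
  set r : ℝ := min ε 2 with hr
  have hr0 : 0 < r := lt_min hε two_pos
  have hdiff : DifferentiableOn ℂ w (Metric.ball (0:ℂ) r \ {0}) := by
    intro t ht
    have h1 : t ≠ 0 := ht.2
    have h2 : ‖t‖ < 2 := by
      have := ht.1
      rw [Metric.mem_ball, dist_zero_right] at this
      exact lt_of_lt_of_le this (min_le_right _ _)
    have hsin : Complex.sin ((π:ℂ) * t / 2) ≠ 0 := sin_ne h1 h2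
    have hden : DifferentiableAt ℂ (fun t : ℂ => Complex.sin ((π:ℂ) * t / 2)) t := by
      fun_prop
    have : DifferentiableAt ℂ w t := differentiableAt_id.div hden hsin
    exact this.differentiableWithinAt
  have hbdd : BddAbove (norm ∘ w '' (Metric.ball (0:ℂ) r \ {0})) := by
    refine ⟨‖(2:ℂ)/(π:ℂ)‖ + 1, ?_⟩
    rintro y ⟨t, ht, rfl⟩
    have : t ∈ Metric.ball (0:ℂ) ε ∩ {(0:ℂ)}ᶜ := by
      refine ⟨?_, ht.2⟩
      exact Metric.ball_subset_ball (min_le_left _ _) ht.1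
    exact (hball this).le
  have H := Complex.differentiableOn_update_limUnder_of_bddAbove
    (Metric.ball_mem_nhds (0:ℂ) hr0) hdiff hbdd
  have hlim : limUnder (𝓝[≠] (0:ℂ)) w = 2/(π:ℂ) := tendsto_w.limUnder_eq
  set h : ℂ → ℂ := Function.update w 0 (limUnder (𝓝[≠] (0:ℂ)) w) with hh
  have hd0 : DifferentiableAt ℂ h 0 :=
    (H.differentiableAt (Metric.ball_mem_nhds (0:ℂ) hr0))
  have hslope := hasDerivAt_iff_tendsto_slope.mp hd0.hasDerivAt
  set L : ℂ := deriv h 0 with hL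
  have heq : ∀ᶠ t in 𝓝[≠] (0:ℂ), slope h 0 t = (w t - 2/(π:ℂ)) / t := by
    refine eventually_mem_nhdsWithin.mono fun t (ht : t ≠ 0) => ?_
    rw [slope_def_field, hh, Function.update_of_ne ht, Function.update_self, hlim, sub_zero]
  have hq : Tendsto (fun t : ℂ => (w t - 2/(π:ℂ)) / t) (𝓝[≠] 0) (𝓝 L) :=
    hslope.congr' heq
  have hq2 : Tendsto (fun t : ℂ => (w (-t) - 2/(π:ℂ)) / (-t)) (𝓝[≠] 0) (𝓝 L) := by
    have := hq.comp tendsto_neg_punctured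
    simpa [Function.comp_def] using this
  have hq3 : Tendsto (fun t : ℂ => -((w t - 2/(π:ℂ)) / t)) (𝓝[≠] 0) (𝓝 L) := by
    refine hq2.congr fun t => ?_
    rw [hw]
    simp only
    rw [w_even t, div_neg]
  have hq4 : Tendsto (fun t : ℂ => -((w t - 2/(π:ℂ)) / t)) (𝓝[≠] 0) (𝓝 (-L)) := hq.neg
  have hL0 : L = -L := tendsto_nhds_unique hq3 hq4
  have : L = 0 := by
    have h2 : (2:ℂ) * L = 0 := by linear_combination hL0
    simpa using h2
  rw [this] at hq
  exact hq

lemma csin_add_nat_mul_pi (z : ℂ) (n : ℕ) :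
    Complex.sin (z + n * (π:ℂ)) = (-1)^n * Complex.sin z := by
  induction n with
  | zero => simp
  | succ k ih =>
      have h : z + ((k+1 : ℕ) : ℂ) * (π:ℂ) = (z + (k:ℕ) * (π:ℂ)) + (π:ℂ) := by push_cast ; ring
      rw [h, Complex.sin_add_pi, ih, pow_succ]; ring

lemma cos_eq (m : ℕ) (s : ℂ) :
    Complex.cos ((π:ℂ) * s / 2) =
      (-1)^m * Complex.sin ((π:ℂ) * (s - (2 * (m:ℂ) - 1)) / 2) := by
  have h : (π:ℂ) * s / 2 =
      ((π:ℂ) * (s - (2 * (m:ℂ) - 1)) / 2 + (m:ℂ) * (π:ℂ)) - (π:ℂ)/2 := by push_cast; ring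
  have h2 : ∀ y : ℂ, Complex.cos (y - (π:ℂ)/2) = Complex.sin y := fun y => by
    rw [show y - (π:ℂ)/2 = -((π:ℂ)/2 - y) by ring, Complex.cos_neg, Complex.cos_pi_div_two_sub]
  rw [h, h2, csin_add_nat_mul_pi]

end LambdaAux

open LambdaAux in
set_option maxHeartbeats 2000000 in
/-- For a positive integer `m` and `0 < x < π`,
`lim_{α→2m-1} [ π x^(α-1)/(4 Γ(α) cos(πα/2)) + (-1)^(m-1) λ(α-2m+2) x^(2m-2)/(2m-2)! ]
  = (-1)^m x^(2m-2) (log(x/2) - H_{2m-2}) / (2 (2m-2)!)`,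
the limit being over real `α` tending to `2m-1` while avoiding `2m-1` itself. -/
theorem lambda_singular_limit_odd (m : ℕ) (hm : 0 < m) (x : ℝ) (hx0 : 0 < x) (hx1 : x < π) :
    Filter.Tendsto
      (fun α : ℝ =>
        (π : ℂ) * (x : ℂ) ^ ((α : ℂ) - 1) /
            (4 * Complex.Gamma (α : ℂ) * Complex.cos ((π : ℂ) * α / 2)) +
          (-1) ^ (m - 1) * dirichletLambda ((α : ℂ) - 2 * m + 2) * (x : ℂ) ^ (2 * m - 2) /
            (Nat.factorial (2 * m - 2) : ℂ))
      (𝓝[≠] ((2 * m : ℝ) - 1))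
      (𝓝 ((-1) ^ m * (x : ℂ) ^ (2 * m - 2) *
          ((Real.log (x / 2) : ℂ) - (harmonic (2 * m - 2) : ℂ)) /
        (2 * (Nat.factorial (2 * m - 2) : ℂ)))) := by
  have hxc : (x : ℂ) ≠ 0 := Complex.ofReal_ne_zero.mpr hx0.ne'
  have h22 : (2:ℕ) ≤ 2 * m := by omega
  have hn2c : ((2*m - 2 : ℕ) : ℂ) = 2*(m:ℂ) - 2 := by
    rw [Nat.cast_sub h22]; push_cast; ring
  have hπc : (π : ℂ) ≠ 0 := Complex.ofReal_ne_zero.mpr Real.pi_ne_zero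
  have hGamma_a : Complex.Gamma (2*(m:ℂ)-1) = ((2*m-2).factorial : ℂ) := by
    rw [show (2*(m:ℂ)-1) = ((2*m-2 : ℕ):ℂ) + 1 by rw [hn2c]; ring,
      Complex.Gamma_nat_eq_factorial]
  have hfacne : ((2*m-2).factorial : ℂ) ≠ 0 := Nat.cast_ne_zero.mpr (Nat.factorial_ne_zero _)
  have hGa_ne : Complex.Gamma (2*(m:ℂ)-1) ≠ 0 := by rw [hGamma_a]; exact hfacne
  have hxa : (x:ℂ) ^ ((2*(m:ℂ)-1) - 1) = (x:ℂ)^(2*m-2 : ℕ) := by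
    rw [show (2*(m:ℂ)-1) - 1 = ((2*m-2:ℕ):ℂ) by rw [hn2c]; ring, Complex.cpow_natCast]
  -- derivative of A
  have hGd : HasDerivAt Complex.Gamma
      (((2*m-2).factorial : ℂ) * (-(Real.eulerMascheroniConstant:ℂ) + (harmonic (2*m-2) : ℂ)))
      (2*(m:ℂ)-1) := by
    have := Complex.hasDerivAt_Gamma_nat (2*m-2)
    rwa [show ((2*m-2:ℕ):ℂ) + 1 = 2*(m:ℂ)-1 by rw [hn2c]; ring] at this
  have hGinv := hGd.inv hGa_ne
  have hx' : HasDerivAt (fun s : ℂ => (x:ℂ)^(s-1))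
      ((x:ℂ)^((2*(m:ℂ)-1)-1) * Complex.log x * 1) (2*(m:ℂ)-1) :=
    ((hasDerivAt_id _).sub_const 1).const_cpow (Or.inl hxc)
  have hA := (hx'.mul hGinv).const_mul ((π:ℂ)/4)
  -- filters
  have hsub : Tendsto (fun s : ℂ => s - (2*(m:ℂ)-1)) (𝓝[≠] (2*(m:ℂ)-1)) (𝓝[≠] 0) := by
    rw [tendsto_nhdsWithin_iff]
    constructor
    · have h0 : Tendsto (fun s : ℂ => s - (2*(m:ℂ)-1)) (𝓝 (2*(m:ℂ)-1))
          (𝓝 (2*(m:ℂ)-1 - (2*(m:ℂ)-1))) := (continuous_id.sub continuous_const).tendsto _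
      rw [sub_self] at h0
      exact h0.mono_left nhdsWithin_le_nhds
    · refine eventually_mem_nhdsWithin.mono fun s hs => ?_
      simp only [Set.mem_compl_iff, Set.mem_singleton_iff] at hs ⊢
      exact sub_ne_zero.mpr hs
  have hshift : Tendsto (fun s : ℂ => s - 2*(m:ℂ) + 2) (𝓝[≠] (2*(m:ℂ)-1)) (𝓝[≠] 1) := by
    rw [tendsto_nhdsWithin_iff]
    constructor
    · have : Tendsto (fun s : ℂ => s - 2*(m:ℂ) + 2) (𝓝 (2*(m:ℂ)-1)) (𝓝 (2*(m:ℂ)-1 - 2*(m:ℂ) + 2)) := by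
        exact ((continuous_id.sub continuous_const).add continuous_const).tendsto _
      rw [show 2*(m:ℂ)-1 - 2*(m:ℂ) + 2 = 1 by ring] at this
      exact this.mono_left nhdsWithin_le_nhds
    · refine eventually_mem_nhdsWithin.mono fun s hs => ?_
      simp only [Set.mem_compl_iff, Set.mem_singleton_iff] at hs ⊢
      exact fun h => hs (by linear_combination h)
  -- pieces
  have hq₂ : Tendsto (fun s : ℂ =>
      ((s - (2*(m:ℂ)-1)) / Complex.sin ((π:ℂ) * (s - (2*(m:ℂ)-1)) / 2) - 2/(π:ℂ)) /
        (s - (2*(m:ℂ)-1))) (𝓝[≠] (2*(m:ℂ)-1)) (𝓝 0) := tendsto_q.comp hsub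
  have hAten : Tendsto (fun s : ℂ => (π:ℂ)/4 * ((x:ℂ)^(s-1) * (Complex.Gamma s)⁻¹))
      (𝓝[≠] (2*(m:ℂ)-1))
      (𝓝 ((π:ℂ)/4 * ((x:ℂ)^((2*(m:ℂ)-1)-1) * (Complex.Gamma (2*(m:ℂ)-1))⁻¹))) :=
    hA.continuousAt.continuousWithinAt
  have hP1 := (tendsto_const_nhds (x := ((-1:ℂ)^m)).mul hAten).mul hq₂
  have hP2 := (hasDerivAt_iff_tendsto_slope.mp hA).const_mul ((-1:ℂ)^m * (2/(π:ℂ)))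
  -- slope of 1 - 2^(-z) at 1
  have hg : HasDerivAt (fun z : ℂ => 1 - (2:ℂ)^(-z))
      (-((2:ℂ)^(-(1:ℂ)) * Complex.log 2 * (-1))) 1 :=
    (((hasDerivAt_id (1:ℂ)).neg).const_cpow (Or.inl two_ne_zero)).const_sub 1
  have hP3 := ((hasDerivAt_iff_tendsto_slope.mp hg).comp hshift).const_mul
    ((-1:ℂ)^(m-1) * (x:ℂ)^(2*m-2 : ℕ) / ((2*m-2).factorial : ℂ))
  -- zeta piece
  have hW : HasDerivAt (fun s : ℂ => 1 - (2:ℂ)^(-(s - 2*(m:ℂ) + 2)))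
      (-((2:ℂ)^(-(2*(m:ℂ)-1 - 2*(m:ℂ) + 2)) * Complex.log 2 *
        (-(1:ℂ)))) (2*(m:ℂ)-1) := by
    have h0 : HasDerivAt (fun s : ℂ => -(s - 2*(m:ℂ) + 2)) (-(1:ℂ)) (2*(m:ℂ)-1) :=
      (((hasDerivAt_id _).sub_const (2*(m:ℂ))).add_const 2).neg
    exact (h0.const_cpow (Or.inl two_ne_zero)).const_sub 1
  have hP4 := ((tendsto_const_nhds (x := ((-1:ℂ)^(m-1) * (x:ℂ)^(2*m-2 : ℕ) /
      ((2*m-2).factorial : ℂ)))).mul hW.continuousAt.continuousWithinAt).mul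
    (tendsto_riemannZeta_sub_one_div.comp hshift)
  have hPsum := ((hP1.add hP2).add hP3).add hP4
  -- eventual equality
  have hev : ∀ᶠ s in 𝓝[≠] (2*(m:ℂ)-1), s ≠ 2*(m:ℂ)-1 ∧ ‖s - (2*(m:ℂ)-1)‖ < 1 := by
    have h1 : ∀ᶠ s in 𝓝 (2*(m:ℂ)-1), ‖s - (2*(m:ℂ)-1)‖ < 1 := by
      filter_upwards [Metric.ball_mem_nhds (2*(m:ℂ)-1) one_pos] with s hs
      simpa [dist_eq_norm] using hs
    exact eventually_mem_nhdsWithin.and (h1.filter_mono nhdsWithin_le_nhds)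
  -- main complex limit
  have hm1 : ((-1:ℂ))^(m-1) = -(-1:ℂ)^m := by
    have hsucc : m - 1 + 1 = m := Nat.succ_pred_eq_of_pos hm
    calc ((-1:ℂ))^(m-1) = -((-1:ℂ)^(m-1) * (-1)) := by ring
    _ = -(-1:ℂ)^(m-1+1) := by rw [pow_succ]
    _ = -(-1:ℂ)^m := by rw [hsucc]
  have hneg1 : ((-1:ℂ)^m)⁻¹ = (-1:ℂ)^m := by
    rw [← inv_pow]; norm_num
  have h21 : (2:ℂ)^(-1:ℂ) = 1/2 := by
    rw [Complex.cpow_neg, Complex.cpow_one]; norm_num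
  have hlog2 : Complex.log 2 = (Real.log 2 : ℂ) := by
    rw [show (2:ℂ) = ((2:ℝ):ℂ) by norm_num, ← Complex.ofReal_log (by norm_num : (0:ℝ) ≤ 2)]
  have hcongr : ∀ᶠ s in 𝓝[≠] (2*(m:ℂ)-1),
      ((-1:ℂ)^m * ((π:ℂ)/4 * ((x:ℂ)^(s-1) * (Complex.Gamma s)⁻¹)) *
          (((s - (2*(m:ℂ)-1)) / Complex.sin ((π:ℂ) * (s - (2*(m:ℂ)-1)) / 2) - 2/(π:ℂ)) /
            (s - (2*(m:ℂ)-1))) +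
        (-1:ℂ)^m * (2/(π:ℂ)) *
          slope (fun y : ℂ => (π:ℂ)/4 * ((x:ℂ)^(y-1) * (Complex.Gamma y)⁻¹)) (2*(m:ℂ)-1) s +
        (-1:ℂ)^(m-1) * (x:ℂ)^(2*m-2 : ℕ) / ((2*m-2).factorial : ℂ) *
          (slope (fun z : ℂ => 1 - (2:ℂ)^(-z)) 1 (s - 2*(m:ℂ) + 2)) +
        (-1:ℂ)^(m-1) * (x:ℂ)^(2*m-2 : ℕ) / ((2*m-2).factorial : ℂ) *
          (1 - (2:ℂ)^(-(s - 2*(m:ℂ) + 2))) *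
          (riemannZeta (s - 2*(m:ℂ) + 2) - 1/((s - 2*(m:ℂ) + 2) - 1))) =
      ((π : ℂ) * (x : ℂ) ^ (s - 1) /
          (4 * Complex.Gamma s * Complex.cos ((π : ℂ) * s / 2)) +
        (-1) ^ (m - 1) * dirichletLambda (s - 2 * m + 2) * (x : ℂ) ^ (2 * m - 2) /
          (Nat.factorial (2 * m - 2) : ℂ)) := by
    filter_upwards [hev] with s hs
    obtain ⟨hne, hb⟩ := hs
    have ht0 : s - (2*(m:ℂ)-1) ≠ 0 := sub_ne_zero.mpr hne
    have hsin : Complex.sin ((π:ℂ) * (s - (2*(m:ℂ)-1)) / 2) ≠ 0 :=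
      sin_ne ht0 (lt_trans hb one_lt_two)
    have hΓs : Complex.Gamma s ≠ 0 := by
      apply Complex.Gamma_ne_zero
      intro k hk
      rw [hk] at hb
      have hkey : ‖-(k:ℂ) - (2*(m:ℂ)-1)‖ = (k:ℝ) + (2*(m:ℝ) - 1) := by
        rw [show -(k:ℂ) - (2*(m:ℂ)-1) = -((((k:ℝ) + (2*(m:ℝ)-1)) : ℝ) : ℂ) by push_cast; ring,
          norm_neg, Complex.norm_real, Real.norm_eq_abs]
        have hm' : (1:ℝ) ≤ (m:ℝ) := by exact_mod_cast hm
        have hk0' : (0:ℝ) ≤ (k:ℝ) := Nat.cast_nonneg k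
        have : (0:ℝ) ≤ (k:ℝ) + (2*(m:ℝ)-1) := by linarith
        exact abs_of_nonneg this
      have hm' : (1:ℝ) ≤ (m:ℝ) := by exact_mod_cast hm
      have hk0 : (0:ℝ) ≤ (k:ℝ) := Nat.cast_nonneg k
      rw [hkey] at hb
      linarith
    have hs1 : s - 2*(m:ℂ) + 2 - 1 ≠ 0 := fun h => hne (by linear_combination h)
    simp only [dirichletLambda, slope_def_field]
    rw [cos_eq m s, hxa, hGamma_a, h21, hm1]
    have hrw : (π:ℂ) * (x:ℂ)^(s-1) /
        (4 * Complex.Gamma s *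
          ((-1:ℂ)^m * Complex.sin ((π:ℂ) * (s - (2*(m:ℂ)-1)) / 2))) =
        (-1:ℂ)^m * ((π:ℂ) * (x:ℂ)^(s-1) /
          (4 * Complex.Gamma s * Complex.sin ((π:ℂ) * (s - (2*(m:ℂ)-1)) / 2))) := by
      rw [show (4:ℂ) * Complex.Gamma s *
          ((-1:ℂ)^m * Complex.sin ((π:ℂ) * (s - (2*(m:ℂ)-1)) / 2)) =
          (-1:ℂ)^m * (4 * Complex.Gamma s * Complex.sin ((π:ℂ) * (s - (2*(m:ℂ)-1)) / 2)) by
          ring,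
        div_mul_eq_div_div_swap, div_eq_mul_inv _ ((-1:ℂ)^m), hneg1]
      ring
    rw [hrw, show s - 2*(m:ℂ) + 2 - 1 = s - (2*(m:ℂ) - 1) by ring]
    set X := (x:ℂ)^(s-1) with hXd
    set G := Complex.Gamma s with hGdef
    set Sn := Complex.sin ((π:ℂ) * (s - (2*(m:ℂ)-1)) / 2) with hSnd
    set Z := riemannZeta (s - 2*(m:ℂ) + 2) with hZd
    set W := (2:ℂ)^(-(s - 2*(m:ℂ) + 2)) with hWd
    set t := s - (2*(m:ℂ) - 1) with htd
    clear_value X G Sn Z W t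
    simp only [← div_eq_mul_inv]
    rw [show (-1:ℂ)^m * ((π:ℂ)/4 * (X / G)) * ((t/Sn - 2/(π:ℂ))/t)
        = (-1:ℂ)^m * ((π:ℂ) * X / (4 * G * Sn)) - (-1:ℂ)^m * X / (2 * G * t) from by
          field_simp; ring]
    rw [sub_div, mul_sub]
    rw [show (-1:ℂ)^m * (2/(π:ℂ)) * (((π:ℂ)/4 * (X / G)) / t)
        = (-1:ℂ)^m * X / (2 * G * t) from by field_simp; ring]
    rw [show (-1:ℂ)^m * (2/(π:ℂ)) * (((π:ℂ)/4 * ((x:ℂ)^(2*m-2:ℕ) / ((2*m-2).factorial : ℂ))) / t)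
        = (-1:ℂ)^m * (x:ℂ)^(2*m-2:ℕ) / (2 * ((2*m-2).factorial : ℂ) * t) from by
          field_simp; ring]
    rw [show -(-1:ℂ)^m * (x:ℂ)^(2*m-2:ℕ) / ((2*m-2).factorial : ℂ) * ((1 - W - (1 - 1/2))/t)
        = (-1:ℂ)^m * (x:ℂ)^(2*m-2:ℕ) * W / (((2*m-2).factorial : ℂ) * t)
          - (-1:ℂ)^m * (x:ℂ)^(2*m-2:ℕ) / (2 * ((2*m-2).factorial : ℂ) * t) from by
          field_simp; ring]
    rw [show -(-1:ℂ)^m * (x:ℂ)^(2*m-2:ℕ) / ((2*m-2).factorial : ℂ) * (1 - W) * (Z - 1/t)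
        = -(-1:ℂ)^m * ((1 - W) * Z) * (x:ℂ)^(2*m-2:ℕ) / ((2*m-2).factorial : ℂ)
          + (-1:ℂ)^m * (x:ℂ)^(2*m-2:ℕ) / (((2*m-2).factorial : ℂ) * t)
          - (-1:ℂ)^m * (x:ℂ)^(2*m-2:ℕ) * W / (((2*m-2).factorial : ℂ) * t) from by
          field_simp; ring]
    ring
  have hFc := Tendsto.congr' hcongr hPsum
  -- cast from ℝ
  have hof : Tendsto (fun α : ℝ => (α:ℂ)) (𝓝[≠] ((2*m:ℝ)-1)) (𝓝[≠] (2*(m:ℂ)-1)) := by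
    rw [tendsto_nhdsWithin_iff]
    constructor
    · have h1 : Tendsto (fun α : ℝ => (α:ℂ)) (𝓝 ((2*m:ℝ)-1)) (𝓝 (((2*m:ℝ)-1 : ℝ) : ℂ)) :=
        Complex.continuous_ofReal.tendsto _
      rw [show (((2*m:ℝ)-1 : ℝ) : ℂ) = 2*(m:ℂ)-1 by push_cast; ring] at h1
      exact h1.mono_left nhdsWithin_le_nhds
    · refine eventually_mem_nhdsWithin.mono fun α hα => ?_
      simp only [Set.mem_compl_iff, Set.mem_singleton_iff] at hα ⊢
      intro h
      apply hα
      have h2 : ((α:ℝ) : ℂ) = (((2*m:ℝ)-1 : ℝ):ℂ) := by rw [h]; push_cast; ring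
      exact_mod_cast h2
  have hcomp := hFc.comp hof
  have hval : ((-1:ℂ)^m * ((π:ℂ)/4 * ((x:ℂ)^((2*(m:ℂ)-1)-1) * (Complex.Gamma (2*(m:ℂ)-1))⁻¹)) * 0 +
      (-1:ℂ)^m * (2/(π:ℂ)) *
        ((π:ℂ)/4 * ((x:ℂ)^((2*(m:ℂ)-1)-1) * Complex.log (x:ℂ) * 1 * (Complex.Gamma (2*(m:ℂ)-1))⁻¹ +
          (x:ℂ)^((2*(m:ℂ)-1)-1) *
            (-(((2*m-2).factorial : ℂ) *
              (-(Real.eulerMascheroniConstant:ℂ) + (harmonic (2*m-2) : ℂ))) /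
              Complex.Gamma (2*(m:ℂ)-1) ^ 2))) +
      (-1:ℂ)^(m-1) * (x:ℂ)^(2*m-2 : ℕ) / ((2*m-2).factorial : ℂ) *
        (-((2:ℂ)^(-1:ℂ) * Complex.log 2 * (-1))) +
      (-1:ℂ)^(m-1) * (x:ℂ)^(2*m-2 : ℕ) / ((2*m-2).factorial : ℂ) *
        (1 - (2:ℂ)^(-(2*(m:ℂ)-1 - 2*(m:ℂ) + 2))) * (Real.eulerMascheroniConstant:ℂ)) =
      ((-1) ^ m * (x : ℂ) ^ (2 * m - 2) *
          ((Real.log (x / 2) : ℂ) - (harmonic (2 * m - 2) : ℂ)) /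
        (2 * (Nat.factorial (2 * m - 2) : ℂ))) := by
    rw [hxa, hGamma_a, show (2*(m:ℂ)-1 - 2*(m:ℂ) + 2) = (1:ℂ) by ring, h21, hm1, hlog2,
      ← Complex.ofReal_log hx0.le,
      show ((Real.log (x/2) : ℝ) : ℂ) = (Real.log x : ℂ) - (Real.log 2 : ℂ) by
        rw [Real.log_div hx0.ne' two_ne_zero]; push_cast; ring]
    rw [show ∀ y : ℂ, (-1:ℂ)^m * (2/(π:ℂ)) * ((π:ℂ)/4 * y) = (-1:ℂ)^m * y / 2 from
      fun y => by field_simp [hπc]; ring]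
    simp only [← div_eq_mul_inv]
    rw [show -(((2*m-2).factorial : ℂ) *
          (-(Real.eulerMascheroniConstant:ℂ) + (harmonic (2*m-2) : ℂ))) /
          ((2*m-2).factorial : ℂ)^2
        = -(-(Real.eulerMascheroniConstant:ℂ) + (harmonic (2*m-2) : ℂ)) /
          ((2*m-2).factorial : ℂ) from by rw [pow_two]; field_simp]
    field_simp
    ring
  simp only [Pi.inv_apply] at hcomp
  rw [hval] at hcomp
  exact hcomp
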